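/- arXiv:2604.10002 — 3 statements merged into one kernel-verified Lean document; each statement's English description precedes it below -/
import Mathlib

section
/- Let B be a strictly convex Banach space, C ⊆ B closed and convex, and T : C → C a quasi-nonexpansive map, i.e., T has at least one fixed point and ‖T(x) - p‖ ≤ ‖x - p‖ for every fixed point p of T and every x ∈ C. Then the set of fixed points of T is a nonempty closed convex subset of C. -/
/-- In a strictly convex Banach space, the fixed point set of a quasi-nonexpansive
self-map of a closed convex set is a nonempty closed convex set. -/
theorem stmt8 {B : Type*} [NormedAddCommGroup B] [NormedSpace ℝ B] [CompleteSpace B]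
    [StrictConvexSpace ℝ B]
    (C : Set B) (hCcl : IsClosed C) (hCconv : Convex ℝ C)
    (T : B → B) (hT : Set.MapsTo T C C)
    (hfix : ∃ p ∈ C, T p = p)
    (hqne : ∀ p ∈ C, T p = p → ∀ x ∈ C, ‖T x - p‖ ≤ ‖x - p‖) :
    {p ∈ C | T p = p}.Nonempty ∧ IsClosed {p ∈ C | T p = p} ∧
      Convex ℝ {p ∈ C | T p = p} := by
  obtain ⟨p₀, hp₀C, hp₀⟩ := hfix
  refine ⟨⟨p₀, hp₀C, hp₀⟩, ?_, ?_⟩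
  · -- closedness
    refine IsSeqClosed.isClosed ?_
    rintro u x hu hulim
    have hxC : x ∈ C := hCcl.mem_of_tendsto hulim (Filter.Eventually.of_forall fun n => (hu n).1)
    refine ⟨hxC, ?_⟩
    have h1 : ∀ n, ‖T x - u n‖ ≤ ‖x - u n‖ := fun n =>
      hqne (u n) (hu n).1 (hu n).2 x hxC
    have h2 : Filter.Tendsto (fun n => ‖x - u n‖) Filter.atTop (nhds 0) := by
      simpa using (hulim.const_sub x).norm
    have h3 : Filter.Tendsto (fun n => ‖T x - u n‖) Filter.atTop (nhds ‖T x - x‖) :=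
      (hulim.const_sub (T x)).norm
    have := le_of_tendsto_of_tendsto' h3 h2 h1
    have : ‖T x - x‖ = 0 := le_antisymm (by simpa using this) (norm_nonneg _)
    have := norm_sub_eq_zero_iff.mp this
    simpa [sub_eq_zero] using this
  · -- convexity
    rintro p ⟨hpC, hp⟩ q ⟨hqC, hq⟩ a b ha hb hab
    set m := a • p + b • q with hm
    have hmC : m ∈ C := hCconv hpC hqC ha hb hab
    refine ⟨hmC, ?_⟩
    rcases eq_or_ne p q with rfl | hpq
    · have : m = p := by
        rw [hm, ← add_smul, hab, one_smul]
      rw [this]; exact hp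
    have hmlm : m = AffineMap.lineMap p q b := by
      simp [AffineMap.lineMap_apply_module, hm, ← hab]
    have hd1 : dist m p = b * dist p q := by
      have h : m - p = b • (q - p) := by
        rw [hm]; rw [show a = 1 - b by linarith]; module
      rw [dist_eq_norm, h, norm_smul, Real.norm_of_nonneg hb, dist_eq_norm, norm_sub_rev]
    have hd2 : dist m q = a * dist p q := by
      have h : m - q = a • (p - q) := by
        rw [hm]; rw [show b = 1 - a by linarith]; module
      rw [dist_eq_norm, h, norm_smul, Real.norm_of_nonneg ha, dist_eq_norm]
    have hle1 : dist (T m) p ≤ dist m p := by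
      simpa [dist_eq_norm] using hqne p hpC hp m hmC
    have hle2 : dist (T m) q ≤ dist m q := by
      simpa [dist_eq_norm] using hqne q hqC hq m hmC
    have hsum : dist p (T m) + dist (T m) q = dist p q := by
      have htri : dist p q ≤ dist p (T m) + dist (T m) q := dist_triangle _ _ _
      have hsum2 : dist m p + dist m q = dist p q := by
        rw [hd1, hd2]; linear_combination dist p q * hab
      rw [dist_comm p (T m)] at htri ⊢
      linarith
    have hwbtw : Wbtw ℝ p (T m) q := dist_add_dist_eq_iff.mp hsum
    -- equalities
    have he1 : dist (T m) p = dist m p := by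
      rw [dist_comm p (T m)] at hsum
      have : dist m p + dist m q = dist p q := by
        rw [hd1, hd2]; linear_combination dist p q * hab
      linarith
    obtain ⟨t, ht, hTm⟩ := hwbtw
    have hTm' : T m = AffineMap.lineMap p q t := hTm.symm
    have hdt : dist (T m) p = t * dist p q := by
      rw [hTm', dist_lineMap_left, Real.norm_of_nonneg ht.1]
    have hdpq : (0:ℝ) < dist p q := dist_pos.mpr hpq
    have htb : t = b := by
      have : t * dist p q = b * dist p q := by rw [← hdt, he1, hd1]
      exact mul_right_cancel₀ (ne_of_gt hdpq) this
    rw [hTm', htb, ← hmlm]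
end

section
/- Let c > 0, a ∈ ℝ, and define h : ℝ → ℝ by h(x) = x - a - c/2 for x ≤ a and h(x) = x - a + c/2 for x > a. Then for every y with |y| < c/2, the map h̃_y(x) = x - (h(x) - y) is a self-map of the interval [a - c, a + c] with no fixed points; consequently h, though discontinuous at a, satisfies the weak property A at a with A = id. -/
/-- The discontinuous jump function `h` satisfies: `x ↦ x - (h x - y)` is a self-map of
`[a - c, a + c]` without fixed points, for every `|y| < c/2`. -/
theorem stmt15 (c : ℝ) (hc : 0 < c) (a : ℝ) (h : ℝ → ℝ)
    (hdef : ∀ x, h x = if x ≤ a then x - a - c / 2 else x - a + c / 2) :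
    ¬ ContinuousAt h a ∧
    ∀ y : ℝ, |y| < c / 2 →
      Set.MapsTo (fun x => x - (h x - y)) (Set.Icc (a - c) (a + c)) (Set.Icc (a - c) (a + c)) ∧
      ∀ x ∈ Set.Icc (a - c) (a + c), x - (h x - y) ≠ x := by
  constructor
  · intro hcont
    have hA : h a = -(c / 2) := by rw [hdef, if_pos le_rfl]; ring
    have h1 : Filter.Tendsto h (nhdsWithin a (Set.Ioi a)) (nhds (h a)) :=
      hcont.tendsto.mono_left nhdsWithin_le_nhds
    have h2 : Filter.Tendsto (fun x => x - a + c / 2) (nhdsWithin a (Set.Ioi a))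
        (nhds (c / 2)) := by
      have hcts : Continuous fun x : ℝ => x - a + c / 2 :=
        (continuous_id.sub continuous_const).add continuous_const
      simpa using (hcts.tendsto a).mono_left nhdsWithin_le_nhds
    have h3 : Filter.Tendsto h (nhdsWithin a (Set.Ioi a)) (nhds (c / 2)) := by
      apply h2.congr'
      filter_upwards [self_mem_nhdsWithin] with x hx
      rw [hdef, if_neg (not_le.mpr hx)]
    have heq : h a = c / 2 := tendsto_nhds_unique h1 h3
    rw [hA] at heq; linarith
  · intro y hy
    rw [abs_lt] at hy
    constructor
    · intro x hx
      simp only [Set.mem_Icc] at hx ⊢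
      rw [hdef]
      by_cases hxa : x ≤ a
      · rw [if_pos hxa]; constructor <;> linarith
      · rw [if_neg hxa]; push_neg at hxa; constructor <;> linarith
    · intro x hx hfix
      have hxy : h x = y := by linarith
      rw [hdef] at hxy
      by_cases hxa : x ≤ a
      · rw [if_pos hxa] at hxy; linarith
      · rw [if_neg hxa] at hxy; push_neg at hxa; linarith
end

section
/- Let B be a uniformly convex Banach space (hence reflexive, hence every closed bounded convex set is weakly compact), C ⊆ B a nonempty closed bounded convex set, and T : C → C nonexpansive (‖T(x) - T(y)‖ ≤ ‖x - y‖). Then the set of fixed points of T is a nonempty closed convex subset of C. -/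
open Filter Metric Bornology Topology
open scoped NNReal

private lemma le_of_forall_pos_le_add'' {a b : ℝ} (h : ∀ ε > 0, a ≤ b + ε) : a ≤ b := by
  by_contra hc
  push_neg at hc
  have := h ((a - b) / 2) (by linarith)
  linarith

/-- Approximate fixed points for a nonexpansive self-map of a nonempty closed bounded
convex set, via the Banach contraction principle. -/
private lemma approx_fixed {B : Type*} [NormedAddCommGroup B] [NormedSpace ℝ B]
    [CompleteSpace B]
    (C : Set B) (hCne : C.Nonempty) (hCcl : IsClosed C) (hCbd : Bornology.IsBounded C)
    (hCconv : Convex ℝ C)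
    (T : B → B) (hT : Set.MapsTo T C C)
    (hne : ∀ x ∈ C, ∀ y ∈ C, ‖T x - T y‖ ≤ ‖x - y‖)
    {ε : ℝ} (hε : 0 < ε) : ∃ x ∈ C, ‖T x - x‖ ≤ ε := by
  obtain ⟨x0, hx0⟩ := hCne
  obtain ⟨R, hR⟩ := hCbd.subset_closedBall x0
  have hR0 : 0 ≤ R := by simpa using hR hx0
  set t : ℝ := min 1 (ε / (R + 1)) with ht
  have ht0 : 0 < t := lt_min one_pos (div_pos hε (by linarith))
  have ht1 : t ≤ 1 := min_le_left _ _
  have htR : t * R ≤ ε := by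
    calc t * R ≤ ε / (R + 1) * R :=
          mul_le_mul_of_nonneg_right (min_le_right _ _) hR0
      _ ≤ ε := by
          rw [div_mul_eq_mul_div, div_le_iff₀ (by linarith)]
          nlinarith
  haveI : Nonempty C := ⟨⟨x0, hx0⟩⟩
  haveI : CompleteSpace C := hCcl.completeSpace_coe
  have hmem : ∀ x : C, t • x0 + (1 - t) • T x ∈ C := fun x =>
    hCconv hx0 (hT x.2) ht0.le (by linarith) (by ring)
  set f : C → C := fun x => ⟨t • x0 + (1 - t) • T x, hmem x⟩ with hf
  have hKlt : ((1 - t : ℝ).toNNReal : ℝ≥0) < 1 := by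
    rw [← NNReal.coe_lt_coe, Real.coe_toNNReal _ (by linarith)]
    simpa using ht0
  have hL : LipschitzWith (1 - t : ℝ).toNNReal f := by
    apply LipschitzWith.of_dist_le_mul
    intro x y
    have hdist : dist (f x) (f y) = ‖(1 - t) • (T x - T y)‖ := by
      rw [Subtype.dist_eq, dist_eq_norm]
      congr 1
      rw [smul_sub]
      show t • x0 + (1 - t) • T x - (t • x0 + (1 - t) • T y) = _
      abel
    rw [hdist, norm_smul, Real.norm_of_nonneg (by linarith),
      Real.coe_toNNReal _ (by linarith : (0:ℝ) ≤ 1 - t)]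
    have : dist (x : B) y = ‖(x : B) - y‖ := dist_eq_norm _ _
    rw [Subtype.dist_eq, this]
    exact mul_le_mul_of_nonneg_left (hne x x.2 y y.2) (by linarith)
  have hcon : ContractingWith (1 - t : ℝ).toNNReal f := ⟨hKlt, hL⟩
  set c := ContractingWith.fixedPoint f hcon with hc
  have hfix : f c = c := hcon.fixedPoint_isFixedPt
  have hfix' : t • x0 + (1 - t) • T (c : B) = (c : B) := congrArg Subtype.val hfix
  refine ⟨(c : B), c.2, ?_⟩
  have hsub : T (c : B) - (c : B) = t • (T (c : B) - x0) := by
    nth_rewrite 2 [← hfix']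
    module
  have hTc : ‖T (c : B) - x0‖ ≤ R := by
    have := hR (hT c.2)
    rwa [mem_closedBall, dist_eq_norm] at this
  calc ‖T (c : B) - (c : B)‖ = t * ‖T (c : B) - x0‖ := by
        rw [hsub, norm_smul, Real.norm_of_nonneg ht0.le]
    _ ≤ t * R := mul_le_mul_of_nonneg_left hTc ht0.le
    _ ≤ ε := htR

/-- Browder–Göhde–Kirk: in a uniformly convex Banach space, a nonexpansive self-map of a
nonempty closed bounded convex set has a nonempty closed convex fixed point set. -/
theorem stmt19 {B : Type*} [NormedAddCommGroup B] [NormedSpace ℝ B] [CompleteSpace B]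
    [UniformConvexSpace B]
    (C : Set B) (hCne : C.Nonempty) (hCcl : IsClosed C) (hCbd : Bornology.IsBounded C)
    (hCconv : Convex ℝ C)
    (T : B → B) (hT : Set.MapsTo T C C)
    (hne : ∀ x ∈ C, ∀ y ∈ C, ‖T x - T y‖ ≤ ‖x - y‖) :
    {p ∈ C | T p = p}.Nonempty ∧ IsClosed {p ∈ C | T p = p} ∧
      Convex ℝ {p ∈ C | T p = p} := by
  -- ## Closedness
  have hclosed : IsClosed {p ∈ C | T p = p} := by
    apply IsSeqClosed.isClosed
    intro x p hx hlim
    have hpC : p ∈ C := hCcl.isSeqClosed (fun n => (hx n).1) hlim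
    refine ⟨hpC, ?_⟩
    have hb : ∀ n, ‖T p - p‖ ≤ 2 * ‖x n - p‖ := by
      intro n
      have tri : ‖T p - p‖ ≤ ‖T p - T (x n)‖ + ‖T (x n) - p‖ := by
        have := dist_triangle (T p) (T (x n)) p
        simpa [dist_eq_norm] using this
      have h1 : ‖T p - T (x n)‖ ≤ ‖p - x n‖ := hne p hpC (x n) (hx n).1
      have h2 : ‖T (x n) - p‖ = ‖x n - p‖ := by rw [(hx n).2]
      have h3 : ‖p - x n‖ = ‖x n - p‖ := norm_sub_rev _ _
      linarith
    have h0 : Tendsto (fun n => 2 * ‖x n - p‖) atTop (𝓝 0) := by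
      have := (tendsto_iff_norm_sub_tendsto_zero.mp hlim).const_mul (2 : ℝ)
      simpa using this
    have hle : ‖T p - p‖ ≤ 0 :=
      le_of_tendsto_of_tendsto' tendsto_const_nhds h0 hb
    have : T p - p = 0 := norm_le_zero_iff.mp hle
    exact sub_eq_zero.mp this
  -- ## Convexity
  have hconv : Convex ℝ {p ∈ C | T p = p} := by
    intro p hp q hq a b ha hb hab
    have hpC := hp.1
    have hqC := hq.1
    set w := a • p + b • q with hw
    have hwC : w ∈ C := hCconv hpC hqC ha hb hab
    refine ⟨hwC, ?_⟩
    have hwp : p - w = b • (p - q) := by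
      rw [hw, show a = 1 - b from by linarith]
      module
    have hwq : w - q = a • (p - q) := by
      rw [hw, show b = 1 - a from by linarith]
      module
    have h1 : dist p (T w) ≤ b * dist p q := by
      rw [dist_eq_norm, dist_eq_norm]
      calc ‖p - T w‖ = ‖T p - T w‖ := by rw [hp.2]
        _ ≤ ‖p - w‖ := hne p hpC w hwC
        _ = b * ‖p - q‖ := by rw [hwp, norm_smul, Real.norm_of_nonneg hb]
    have h2 : dist (T w) q ≤ a * dist p q := by
      rw [dist_eq_norm, dist_eq_norm]
      calc ‖T w - q‖ = ‖T w - T q‖ := by rw [hq.2]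
        _ ≤ ‖w - q‖ := hne w hwC q hqC
        _ = a * ‖p - q‖ := by rw [hwq, norm_smul, Real.norm_of_nonneg ha]
    have htri : dist p q ≤ dist p (T w) + dist (T w) q := dist_triangle _ _ _
    have hbd : b * dist p q + a * dist p q = dist p q := by
      rw [← add_mul, add_comm b a, hab, one_mul]
    have e1 : dist p (T w) = b * dist p q := by linarith
    have e2 : dist (T w) q = (1 - b) * dist p q := by
      rw [show (1:ℝ) - b = a from by linarith]
      linarith
    have hTw : T w = AffineMap.lineMap p q b :=
      eq_lineMap_of_dist_eq_mul_of_dist_eq_mul e1 e2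
    have hline : (AffineMap.lineMap p q b : B) = w := by
      rw [AffineMap.lineMap_apply_module, hw]
      rw [show (1 : ℝ) - b = a by linarith]
    rw [hTw, hline]
  -- ## Existence
  have hmain : {p ∈ C | T p = p}.Nonempty := by
    obtain ⟨x0, hx0⟩ := hCne
    obtain ⟨R, hR⟩ := hCbd.subset_closedBall x0
    have hR0 : 0 ≤ R := by simpa using hR hx0
    have huex : ∀ n : ℕ, ∃ x ∈ C, ‖T x - x‖ ≤ 1 / (n + 1) := fun n =>
      approx_fixed C ⟨x0, hx0⟩ hCcl hCbd hCconv T hT hne (by positivity)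
    choose u huC huT using huex
    set φ : B → ℝ := fun z => limsup (fun n => ‖z - u n‖) atTop with hφdef
    have hbdd : ∀ z : B, IsBoundedUnder (· ≤ ·) atTop (fun n => ‖z - u n‖) := by
      intro z
      refine isBoundedUnder_of ⟨‖z - x0‖ + R, fun n => ?_⟩
      have tri : ‖z - u n‖ ≤ ‖z - x0‖ + ‖x0 - u n‖ := by
        have := dist_triangle z x0 (u n)
        simpa [dist_eq_norm] using this
      have hun : ‖x0 - u n‖ ≤ R := by
        have := hR (huC n)
        rw [mem_closedBall, dist_eq_norm] at this
        rwa [norm_sub_rev]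
      linarith
    have hcob : ∀ z : B, IsCoboundedUnder (· ≤ ·) atTop (fun n => ‖z - u n‖) := fun z =>
      isCoboundedUnder_le_of_eventually_le atTop (x := 0)
        (Eventually.of_forall fun n => norm_nonneg _)
    have hφ_le : ∀ z : B, ∀ a : ℝ, (∀ᶠ n in atTop, ‖z - u n‖ ≤ a) → φ z ≤ a := fun z a h =>
      limsup_le_of_le (hcob z) h
    have hev_lt : ∀ z : B, ∀ a : ℝ, φ z < a → ∀ᶠ n in atTop, ‖z - u n‖ < a := fun z a h =>
      eventually_lt_of_limsup_lt h (hbdd z)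
    have hφ0 : ∀ z : B, 0 ≤ φ z := fun z =>
      le_limsup_of_frequently_le (Frequently.of_forall fun n => norm_nonneg _) (hbdd z)
    haveI : Nonempty C := ⟨⟨x0, hx0⟩⟩
    set m : ℝ := ⨅ z : C, φ z with hm
    have hbelow : BddBelow (Set.range fun z : C => φ z) :=
      ⟨0, by rintro _ ⟨z, rfl⟩; exact hφ0 z⟩
    have hm_le : ∀ z ∈ C, m ≤ φ z := fun z hz => ciInf_le hbelow ⟨z, hz⟩
    have hm0 : 0 ≤ m := le_ciInf fun z => hφ0 z
    -- key uniform-convexity estimate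
    have key : ∀ ε > (0:ℝ), ∃ η > (0:ℝ), ∀ zj ∈ C, ∀ zk ∈ C,
        φ zj < m + η → φ zk < m + η → ‖zj - zk‖ < ε := by
      intro ε hε
      rcases eq_or_lt_of_le hm0 with hmz | hmpos
      · -- m = 0
        refine ⟨ε / 4, by positivity, fun zj hj zk hk hφj hφk => ?_⟩
        rw [← hmz, zero_add] at hφj hφk
        obtain ⟨n, hn1, hn2⟩ := ((hev_lt zj _ hφj).and (hev_lt zk _ hφk)).exists
        have tri : ‖zj - zk‖ ≤ ‖zj - u n‖ + ‖zk - u n‖ := by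
          have := dist_triangle zj (u n) zk
          simpa [dist_eq_norm, norm_sub_rev (zk) (u n)] using this
        linarith
      · -- m > 0
        obtain ⟨δ, hδ, hδmain⟩ :=
          exists_forall_closed_ball_dist_add_le_two_sub B
            (show (0:ℝ) < ε / (m + 1) by positivity)
        set η : ℝ := min (1/2) (m * δ / 8) with hη
        have hη0 : 0 < η := lt_min (by norm_num) (by positivity)
        refine ⟨η, hη0, fun zj hj zk hk hφj hφk => ?_⟩
        by_contra hcon
        push_neg at hcon
        set r : ℝ := m + 2 * η with hr
        have hr0 : 0 < r := by linarith
        have hrm : r ≤ m + 1 := by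
          have : η ≤ 1/2 := min_le_left _ _
          linarith
        have hηm : 2 * η ≤ m * δ / 4 := by
          have : η ≤ m * δ / 8 := min_le_right _ _
          linarith
        have hjn : ∀ᶠ n in atTop, ‖zj - u n‖ < r :=
          hev_lt zj r (by rw [hr]; linarith)
        have hkn : ∀ᶠ n in atTop, ‖zk - u n‖ < r :=
          hev_lt zk r (by rw [hr]; linarith)
        set w := (1/2 : ℝ) • zj + (1/2 : ℝ) • zk with hwdef
        have hwC : w ∈ C := hCconv hj hk (by norm_num) (by norm_num) (by norm_num)
        have hwn : ∀ᶠ n in atTop, ‖w - u n‖ ≤ m - m * δ / 4 := by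
          filter_upwards [hjn, hkn] with n h1 h2
          have hx : ‖r⁻¹ • (zj - u n)‖ ≤ 1 := by
            rw [norm_smul, Real.norm_of_nonneg (inv_nonneg.mpr hr0.le)]
            rw [inv_mul_le_iff₀ hr0, mul_one]
            exact h1.le
          have hy : ‖r⁻¹ • (zk - u n)‖ ≤ 1 := by
            rw [norm_smul, Real.norm_of_nonneg (inv_nonneg.mpr hr0.le)]
            rw [inv_mul_le_iff₀ hr0, mul_one]
            exact h2.le
          have hxy : ε / (m + 1) ≤ ‖r⁻¹ • (zj - u n) - r⁻¹ • (zk - u n)‖ := by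
            rw [← smul_sub, norm_smul, Real.norm_of_nonneg (inv_nonneg.mpr hr0.le)]
            have heq : zj - u n - (zk - u n) = zj - zk := by abel
            rw [heq]
            rw [div_le_iff₀ (by linarith : (0:ℝ) < m + 1)]
            calc ε ≤ ‖zj - zk‖ := hcon
              _ = r * (r⁻¹ * ‖zj - zk‖) := by field_simp
              _ ≤ (m + 1) * (r⁻¹ * ‖zj - zk‖) := by
                  apply mul_le_mul_of_nonneg_right hrm
                  positivity
              _ = r⁻¹ * ‖zj - zk‖ * (m + 1) := by ring
          have hsum := hδmain hx hy hxy
          have hws : w - u n = (1/2 : ℝ) • ((zj - u n) + (zk - u n)) := by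
            rw [hwdef, smul_add]
            module
          have hnorm : ‖w - u n‖ ≤ r * (2 - δ) / 2 := by
            rw [hws, norm_smul]
            rw [show ((zj - u n) + (zk - u n)) = r • (r⁻¹ • (zj - u n) + r⁻¹ • (zk - u n)) by
              rw [smul_add, smul_inv_smul₀ hr0.ne', smul_inv_smul₀ hr0.ne']]
            rw [norm_smul, Real.norm_of_nonneg hr0.le, Real.norm_of_nonneg (by norm_num : (0:ℝ) ≤ 1/2)]
            calc (1/2) * (r * ‖r⁻¹ • (zj - u n) + r⁻¹ • (zk - u n)‖)
                ≤ (1/2) * (r * (2 - δ)) := by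
                  apply mul_le_mul_of_nonneg_left _ (by norm_num)
                  exact mul_le_mul_of_nonneg_left hsum hr0.le
              _ = r * (2 - δ) / 2 := by ring
          have hfin : r * (2 - δ) / 2 ≤ m - m * δ / 4 := by
            rw [hr]
            nlinarith [hη0.le, hmpos, hδ]
          linarith
        have hφw : φ w ≤ m - m * δ / 4 := hφ_le w _ hwn
        have := hm_le w hwC
        nlinarith [hmpos, hδ]
    -- minimizing sequence
    have hzex : ∀ k : ℕ, ∃ z ∈ C, φ z < m + 1 / (k + 1) := by
      intro k
      have hlt : m < m + 1 / ((k:ℝ) + 1) := lt_add_of_pos_right _ (by positivity)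
      obtain ⟨⟨z, hzC⟩, hz⟩ := exists_lt_of_ciInf_lt (hm ▸ hlt : ⨅ z : C, φ z < m + 1 / (k + 1))
      exact ⟨z, hzC, hz⟩
    choose z hzC hzφ using hzex
    have hmono : ∀ j N : ℕ, N ≤ j → 1 / ((j:ℝ) + 1) ≤ 1 / ((N:ℝ) + 1) := by
      intro j N hNj
      apply one_div_le_one_div_of_le (by positivity)
      have : (N : ℝ) ≤ j := Nat.cast_le.mpr hNj
      linarith
    have hcauchy : CauchySeq z := by
      rw [Metric.cauchySeq_iff]
      intro ε hε
      obtain ⟨η, hη, hP⟩ := key ε hε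
      obtain ⟨N, hN⟩ := exists_nat_gt (1 / η)
      have hNη : 1 / ((N:ℝ) + 1) < η := by
        rw [div_lt_iff₀ (by positivity)]
        rw [div_lt_iff₀ hη] at hN
        nlinarith
      refine ⟨N, fun j hj k hk => ?_⟩
      rw [dist_eq_norm]
      exact hP _ (hzC j) _ (hzC k)
        (lt_of_lt_of_le (hzφ j) (by linarith [hmono j N hj]))
        (lt_of_lt_of_le (hzφ k) (by linarith [hmono k N hk]))
    obtain ⟨p, hp⟩ := cauchySeq_tendsto_of_complete hcauchy
    have hpC : p ∈ C := hCcl.isSeqClosed hzC hp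
    have hφp : φ p ≤ m := by
      apply le_of_forall_pos_le_add''
      intro ε hε
      have h1 : ∀ᶠ k in atTop, dist (z k) p < ε / 3 :=
        (hp.eventually (Metric.ball_mem_nhds p (by positivity : (0:ℝ) < ε/3)) : _)
      have h2 : ∀ᶠ k : ℕ in atTop, 1 / ((k:ℝ) + 1) < ε / 3 := by
        have : Tendsto (fun n : ℕ => 1 / ((n : ℝ) + 1)) atTop (𝓝 0) := tendsto_one_div_add_atTop_nhds_zero_nat
        exact this.eventually_lt_const (by positivity)
      obtain ⟨k, hk1, hk2⟩ := (h1.and h2).exists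
      apply hφ_le
      have hev := hev_lt (z k) (m + 1 / (k + 1)) (hzφ k)
      filter_upwards [hev] with n hn
      have tri : ‖p - u n‖ ≤ ‖p - z k‖ + ‖z k - u n‖ := by
        have := dist_triangle p (z k) (u n)
        simpa [dist_eq_norm] using this
      have hd : ‖p - z k‖ < ε / 3 := by
        rw [← dist_eq_norm, dist_comm]; exact hk1
      linarith
    have hφT : φ (T p) ≤ m := by
      apply le_of_forall_pos_le_add''
      intro ε hε
      have h1 : ∀ᶠ n in atTop, ‖p - u n‖ < m + ε / 2 :=
        hev_lt p _ (lt_of_le_of_lt hφp (by linarith))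
      have h2 : ∀ᶠ n : ℕ in atTop, 1 / ((n:ℝ) + 1) < ε / 2 :=
        tendsto_one_div_add_atTop_nhds_zero_nat.eventually_lt_const (by positivity)
      apply hφ_le
      filter_upwards [h1, h2] with n hn1 hn2
      have tri : ‖T p - u n‖ ≤ ‖T p - T (u n)‖ + ‖T (u n) - u n‖ := by
        have := dist_triangle (T p) (T (u n)) (u n)
        simpa [dist_eq_norm] using this
      have h3 : ‖T p - T (u n)‖ ≤ ‖p - u n‖ := hne p hpC (u n) (huC n)
      have h4 := huT n
      linarith
    have hTp : T p = p := by
      have hTC : T p ∈ C := hT hpC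
      have hsmall : ∀ ε > (0:ℝ), ‖T p - p‖ < ε := by
        intro ε hε
        obtain ⟨η, hη, hP⟩ := key ε hε
        exact hP _ hTC _ hpC (lt_of_le_of_lt hφT (by linarith))
          (lt_of_le_of_lt hφp (by linarith))
      have h0 : ‖T p - p‖ ≤ 0 := by
        apply le_of_forall_pos_le_add''
        intro ε hε
        have := hsmall ε hε
        linarith
      exact sub_eq_zero.mp (norm_le_zero_iff.mp h0)
    exact ⟨p, hpC, hTp⟩
  exact ⟨hmain, hclosed, hconv⟩
end
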